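/- Let C be a pure normal simplicial complex of dimension d−1, let S be a nonempty set of vertices of C, and let F=(v_1,…,v_d) be an ordered facet of C whose ordering is admissible with respect to S. If either F∩S=∅, or S is a face of C not strictly contained in F, then every entry of the vector of distances from F to S is finite. -/

import Mathlib

/-! Common definitions: pure simplicial complexes (represented by their facet sets),
vertex-distance, links, ordered facets, vectors of distances, admissibility, and
monotone/conservative dual paths, following Adiprasito–Benedetti's combinatorial
segments. -/

open scoped Classical

noncomputable section

namespace MCP

variable {V : Type} [DecidableEq V] [Fintype V]

/-- The vertex set of the complex whose set of facets is `C`. -/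
def verts (C : Finset (Finset V)) : Finset V := C.sup id

/-- `f` is a face of the pure complex with facet set `C`. -/
def IsFace (C : Finset (Finset V)) (f : Finset V) : Prop := ∃ F ∈ C, f ⊆ F

/-- `C` is pure of dimension `d - 1`: every facet has `d` vertices. -/
def Pure (C : Finset (Finset V)) (d : ℕ) : Prop := ∀ F ∈ C, F.card = d

/-- The 1-skeleton of the complex: two vertices are joined iff they lie in a common facet. -/
def skeleton (C : Finset (Finset V)) : SimpleGraph V where
  Adj u v := u ≠ v ∧ ∃ F ∈ C, u ∈ F ∧ v ∈ F
  symm := by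
    constructor
    rintro u v ⟨h, F, hF, hu, hv⟩
    exact ⟨h.symm, F, hF, hv, hu⟩
  loopless := by constructor; rintro u ⟨h, -⟩; exact h rfl

/-- Two facets are adjacent in the dual graph iff they differ in a single vertex. -/
def AdjFacets (F G : Finset V) : Prop :=
  F ≠ G ∧ F.card = G.card ∧ (F ∩ G).card + 1 = F.card

/-- A dual path: a list of facets of `C` in which consecutive facets are adjacent. -/
def IsDualPath (C : Finset (Finset V)) (P : List (Finset V)) : Prop :=
  (∀ F ∈ P, F ∈ C) ∧ P.Chain' AdjFacets

/-- `C` is normal: for every face `f`, any two facets containing `f` are joined by a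
dual path all of whose facets contain `f`. -/
def Normal (C : Finset (Finset V)) : Prop :=
  ∀ f : Finset V, ∀ F ∈ C, ∀ G ∈ C, f ⊆ F → f ⊆ G →
    ∃ P : List (Finset V), P.head? = some F ∧ P.getLast? = some G ∧
      (∀ H ∈ P, H ∈ C ∧ f ⊆ H) ∧ P.Chain' AdjFacets

/-- The (facet set of the) link of a vertex `x` in `C`. -/
def link (C : Finset (Finset V)) (x : V) : Finset (Finset V) :=
  (C.filter (fun F => x ∈ F)).image (fun F => F.erase x)

/-- Vertex-distance (in the 1-skeleton) between two sets of vertices, with value `⊤`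
if one of the sets is empty, and with the special `0/1` convention when the complex
is `0`-dimensional. -/
def vdistSets (C : Finset (Finset V)) (S T : Finset V) : ℕ∞ :=
  if C.sup Finset.card ≤ 1 then
    (if S.Nonempty ∧ T.Nonempty then (if (S ∩ T).Nonempty then 0 else 1) else ⊤)
  else ⨅ u ∈ S, ⨅ v ∈ T, (skeleton C).edist u v

/-- The derived target set `S'` in the link of `x`, used in the recursive definitions
of the vector of distances and of admissibility. -/
def targetSet (C : Finset (Finset V)) (x : V) (S : Finset V) : Finset V :=
  if x ∈ S then S ∩ verts (link C x)
  else (verts (link C x)).filter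
    (fun w => vdistSets C {w} S + 1 = vdistSets C {x} S)

/-- The vector of distances from an ordered facet (a list of vertices) to a target set. -/
def distVector : Finset (Finset V) → List V → Finset V → List ℕ∞
  | _, [], _ => []
  | C, x :: rest, S => vdistSets C {x} S :: distVector (link C x) rest (targetSet C x S)

/-- Admissibility of an ordering of a facet with respect to a target set: the first
vertex realizes the vertex-distance from the facet to the target set, and recursively
in the link. -/
def Admissible : Finset (Finset V) → List V → Finset V → Prop
  | _, [], _ => True
  | C, x :: rest, S =>
      vdistSets C {x} S = vdistSets C (x :: rest).toFinset S ∧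
      Admissible (link C x) rest (targetSet C x S)

/-- An ordered facet of `C`: a repetition-free list of vertices forming a facet. -/
def IsOrderedFacet (C : Finset (Finset V)) (L : List V) : Prop :=
  L.Nodup ∧ L.toFinset ∈ C

/-- A dual path of ordered facets. -/
def IsOrderedDualPath (C : Finset (Finset V)) (Γ : List (List V)) : Prop :=
  (∀ L ∈ Γ, IsOrderedFacet C L) ∧
  Γ.Chain' (fun L M => AdjFacets L.toFinset M.toFinset)

/-- A path of ordered facets is monotone towards `S` if its vectors of distances are
strictly lexicographically decreasing. -/
def MonotonePath (C : Finset (Finset V)) (S : Finset V) (Γ : List (List V)) : Prop :=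
  Γ.Chain' (fun L M => List.Lex (· < ·) (distVector C M S) (distVector C L S))

/-- The index of a step: the least position at which the two orderings differ. -/
def stepIndex (L M : List V) : ℕ := sInf {k : ℕ | L[k]? ≠ M[k]?}

/-- The step from `L` to `M` is conservative towards `S`: the removed vertex is the last
vertex of `L`, and `M` is admissibly ordered with maximum index among all admissible
reorderings. -/
def ConservativeStep (C : Finset (Finset V)) (S : Finset V) (L M : List V) : Prop :=
  (∃ x, L.getLast? = some x ∧ L.toFinset \ M.toFinset = {x}) ∧
  Admissible C M S ∧
  ∀ M' : List V, M'.Perm M → Admissible C M' S → stepIndex L M' ≤ stepIndex L M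

/-- A path of ordered facets is conservative towards `S` if its first facet is
admissibly ordered and every step is conservative. -/
def ConservativePath (C : Finset (Finset V)) (S : Finset V) (Γ : List (List V)) : Prop :=
  (∀ L ∈ Γ.head?, Admissible C L S) ∧ Γ.Chain' (ConservativeStep C S)

/-- A monotone conservative dual path of ordered facets towards `S`. -/
def MonoConsPath (C : Finset (Finset V)) (S : Finset V) (Γ : List (List V)) : Prop :=
  IsOrderedDualPath C Γ ∧ MonotonePath C S Γ ∧ ConservativePath C S Γ

/-- The path `Γ` starts at the facet `F`. -/
def StartsAt (Γ : List (List V)) (F : Finset V) : Prop :=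
  ∃ L, Γ.head? = some L ∧ L.toFinset = F

/-- The path `Γ` ends at the facet `F`. -/
def EndsAt (Γ : List (List V)) (F : Finset V) : Prop :=
  ∃ L, Γ.getLast? = some L ∧ L.toFinset = F

/-- `C` is flag: every set of vertices of `C` pairwise joined by edges of `C` is a face. -/
def Flag (C : Finset (Finset V)) : Prop :=
  ∀ T : Finset V, T ⊆ verts C →
    (∀ u ∈ T, ∀ v ∈ T, u ≠ v → (skeleton C).Adj u v) → IsFace C T

/-- A critical clique: a clique of the 1-skeleton that becomes a face after removing a
suitable vertex. -/
def CriticalClique (C : Finset (Finset V)) (T : Finset V) : Prop :=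
  (∀ u ∈ T, ∀ v ∈ T, u ≠ v → (skeleton C).Adj u v) ∧ ∃ v ∈ T, IsFace C (T.erase v)

/-- `C` is `k`-banner: every critical clique with at least `k + 1` vertices is a face. -/
def Banner (C : Finset (Finset V)) (k : ℕ) : Prop :=
  ∀ T : Finset V, CriticalClique C T → k + 1 ≤ T.card → IsFace C T

/-- A pure `(d-1)`-complex is a pseudomanifold (possibly with boundary) if every
`(d-2)`-dimensional face lies in at most two facets. -/
def Pseudomanifold (C : Finset (Finset V)) (d : ℕ) : Prop :=
  ∀ f : Finset V, f.card + 1 = d → IsFace C f → (C.filter (fun F => f ⊆ F)).card ≤ 2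

/-- A pure `(d-1)`-complex is a pseudomanifold without boundary if every
`(d-2)`-dimensional face lies in exactly two facets. -/
def PseudomanifoldNoBoundary (C : Finset (Finset V)) (d : ℕ) : Prop :=
  ∀ f : Finset V, f.card + 1 = d → IsFace C f → (C.filter (fun F => f ⊆ F)).card = 2

/-- The join of two complexes (given by their facet sets, on disjoint vertex sets). -/
def join (C₁ C₂ : Finset (Finset V)) : Finset (Finset V) :=
  (C₁ ×ˢ C₂).image (fun p => p.1 ∪ p.2)

/-- The one-point-suspension of `C` at the vertex `v`; the two new suspension vertices
are `Sum.inr false` and `Sum.inr true`. -/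
def ops (C : Finset (Finset V)) (v : V) : Finset (Finset (V ⊕ Bool)) :=
  ((C.filter (fun F => v ∈ F)).image
      (fun F => ((F.erase v).image Sum.inl) ∪ {Sum.inr false, Sum.inr true}))
  ∪ ((C.filter (fun F => v ∉ F)).image (fun F => (F.image Sum.inl) ∪ {Sum.inr false}))
  ∪ ((C.filter (fun F => v ∉ F)).image (fun F => (F.image Sum.inl) ∪ {Sum.inr true}))

/-- The degree of a vertex in the 1-skeleton of `C`. -/
def degree (C : Finset (Finset V)) (x : V) : ℕ :=
  (Finset.univ.filter fun w => (skeleton C).Adj x w).card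

/-- Vertex-decomposability of a pure complex given by its facet set: either a single
simplex, or there is a vertex whose deletion stays pure of the same dimension and whose
link and deletion are both vertex-decomposable.  (The condition
`∀ F ∈ C, ∃ G ∈ C, x ∉ G ∧ F.erase x ⊆ G` expresses that the deletion of `x` is pure
of the same dimension, so that its facets are the facets of `C` avoiding `x`.) -/
inductive VertexDecomposable : Finset (Finset V) → Prop
  | simplex (F : Finset V) : VertexDecomposable {F}
  | step (C : Finset (Finset V)) (x : V) (hx : x ∈ verts C)
      (hdelpure : ∀ F ∈ C, ∃ G ∈ C, x ∉ G ∧ F.erase x ⊆ G)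
      (hlink : VertexDecomposable (link C x))
      (hdel : VertexDecomposable (C.filter (fun F => x ∉ F))) :
      VertexDecomposable C

/-- The maximum length (number of steps) of a monotone conservative path in `C`, over
all nonempty target sets of vertices of `C`. -/
def maxl (C : Finset (Finset V)) : ℕ :=
  sSup {n : ℕ | ∃ (S : Finset V) (Γ : List (List V)), S.Nonempty ∧ S ⊆ verts C ∧
    MonoConsPath C S Γ ∧ Γ.length = n + 1}

/-- `CombSeg C Γ S x₀`: the dual path `Γ` is a combinatorial segment in `C` from its
first facet to the target set `S`, anchored at `x₀` (Adiprasito–Benedetti). -/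
inductive CombSeg : Finset (Finset V) → List (Finset V) → Finset V → V → Prop
  | intersects (C : Finset (Finset V)) (F S : Finset V) (x₀ : V)
      (hF : F ∈ C) (hx : x₀ ∈ F) (hFS : (F ∩ S).Nonempty) :
      CombSeg C [F] S x₀
  | dimOne (C : Finset (Finset V)) (S : Finset V) (x₀ v : V)
      (hdim : ∀ F ∈ C, F.card = 1)
      (h₁ : {x₀} ∈ C) (h₂ : {v} ∈ C) (hx : x₀ ∉ S) (hv : v ∈ S) :
      CombSeg C [{x₀}, {v}] S x₀
  | step (C : Finset (Finset V)) (F₀ : Finset V) (Γ₁ Γ₂ : List (Finset V))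
      (Fk S : Finset V) (x₀ y x₀' : V) (ℓ : ℕ∞)
      (hdim : ∀ F ∈ C, 2 ≤ F.card)
      (hmem : ∀ F ∈ F₀ :: Γ₁, F ∈ C)
      (hdisj : ∀ F ∈ F₀ :: Γ₁, F ∩ S = ∅)
      (hℓ : vdistSets C F₀ S = ℓ)
      (hbefore : ∀ F ∈ F₀ :: Γ₁, ¬ vdistSets C F S < ℓ)
      (hafter : vdistSets C Fk S < ℓ)
      (hy : y ∈ Fk)
      (hyd : vdistSets C {y} S + 1 = ℓ)
      (hyuniq : ∀ z ∈ Fk, vdistSets C {z} S + 1 = ℓ → z = y)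
      (hx₀ : ∀ F ∈ F₀ :: Γ₁, x₀ ∈ F) (hx₀k : x₀ ∈ Fk)
      (hlink : CombSeg (link C x₀)
          (((F₀ :: Γ₁) ++ [Fk]).map (fun F => F.erase x₀))
          ((verts (link C x₀)).filter (fun w => vdistSets C {w} S + 1 = ℓ)) x₀')
      (htail : CombSeg C (Fk :: Γ₂) S y) :
      CombSeg C (F₀ :: Γ₁ ++ Fk :: Γ₂) S x₀

end MCP

namespace MCP

variable {V : Type} [DecidableEq V] [Fintype V]

lemma mem_verts' {C : Finset (Finset V)} {w : V} :
    w ∈ verts C ↔ ∃ G ∈ C, w ∈ G := by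
  simp [verts, Finset.mem_sup]

lemma mem_link' {C : Finset (Finset V)} {x : V} {f : Finset V} :
    f ∈ link C x ↔ ∃ G ∈ C, x ∈ G ∧ f = G.erase x := by
  simp only [link, Finset.mem_image, Finset.mem_filter]
  constructor
  · rintro ⟨G, ⟨hG, hx⟩, rfl⟩; exact ⟨G, hG, hx, rfl⟩
  · rintro ⟨G, hG, hx, rfl⟩; exact ⟨G, ⟨hG, hx⟩, rfl⟩

lemma mem_verts_link' {C : Finset (Finset V)} {x w : V} :
    w ∈ verts (link C x) ↔ w ≠ x ∧ ∃ G ∈ C, x ∈ G ∧ w ∈ G := by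
  rw [mem_verts']
  constructor
  · rintro ⟨f, hf, hw⟩
    obtain ⟨G, hG, hx, rfl⟩ := mem_link'.1 hf
    exact ⟨Finset.ne_of_mem_erase hw, G, hG, hx, Finset.mem_of_mem_erase hw⟩
  · rintro ⟨hne, G, hG, hx, hw⟩
    exact ⟨G.erase x, mem_link'.2 ⟨G, hG, hx, rfl⟩, Finset.mem_erase.2 ⟨hne, hw⟩⟩

lemma pure_link' {C : Finset (Finset V)} {d : ℕ} {x : V} (h : Pure C (d + 1)) :
    Pure (link C x) d := by
  intro f hf
  obtain ⟨G, hG, hx, rfl⟩ := mem_link'.1 hf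
  rw [Finset.card_erase_of_mem hx, h G hG]
  omega

lemma chain'_mono_mem {α : Type*} {R S : α → α → Prop} :
    ∀ {l : List α}, (∀ a ∈ l, ∀ b ∈ l, R a b → S a b) → l.Chain' R → l.Chain' S
  | [], _, _ => List.isChain_nil
  | [a], _, _ => List.isChain_singleton a
  | a :: b :: l, h, hc => by
      simp only [List.Chain', List.isChain_cons_cons] at hc ⊢
      refine ⟨h a (by simp) b (by simp) hc.1, ?_⟩
      exact chain'_mono_mem
        (fun u hu v hv => h u (List.mem_cons_of_mem a hu) v (List.mem_cons_of_mem a hv)) hc.2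

lemma adjFacets_erase {H H' : Finset V} {x : V} (hx : x ∈ H) (hx' : x ∈ H')
    (h : AdjFacets H H') : AdjFacets (H.erase x) (H'.erase x) := by
  obtain ⟨hne, hcard, hint⟩ := h
  have hxm : x ∈ H ∩ H' := Finset.mem_inter.2 ⟨hx, hx'⟩
  have h1 : 1 ≤ (H ∩ H').card := Finset.card_pos.2 ⟨x, hxm⟩
  have hinter : (H.erase x) ∩ (H'.erase x) = (H ∩ H').erase x := by
    ext a
    simp only [Finset.mem_inter, Finset.mem_erase]
    tauto
  refine ⟨?_, ?_, ?_⟩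
  · intro he
    apply hne
    have := congrArg (insert x) he
    rwa [Finset.insert_erase hx, Finset.insert_erase hx'] at this
  · rw [Finset.card_erase_of_mem hx, Finset.card_erase_of_mem hx', hcard]
  · rw [hinter, Finset.card_erase_of_mem hxm, Finset.card_erase_of_mem hx]
    omega

lemma normal_link' {C : Finset (Finset V)} (h : Normal C) (x : V) :
    Normal (link C x) := by
  intro f F' hF' G' hG' hfF' hfG'
  obtain ⟨F, hF, hxF, rfl⟩ := mem_link'.1 hF'
  obtain ⟨G, hG, hxG, rfl⟩ := mem_link'.1 hG'
  have hxf : x ∉ f := fun hx => (Finset.mem_erase.1 (hfF' hx)).1 rfl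
  obtain ⟨P, hh, hl, hmem, hc⟩ := h (insert x f) F hF G hG
    (Finset.insert_subset hxF (hfF'.trans (Finset.erase_subset _ _)))
    (Finset.insert_subset hxG (hfG'.trans (Finset.erase_subset _ _)))
  refine ⟨P.map (fun H => H.erase x), ?_, ?_, ?_, ?_⟩
  · rw [List.head?_map, hh]; rfl
  · rw [List.getLast?_map, hl]; rfl
  · intro H' hH'
    obtain ⟨H, hH, rfl⟩ := List.mem_map.1 hH'
    have hm := hmem H hH
    have hxH : x ∈ H := hm.2 (Finset.mem_insert_self _ _)
    refine ⟨mem_link'.2 ⟨H, hm.1, hxH, rfl⟩, ?_⟩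
    intro a ha
    exact Finset.mem_erase.2 ⟨fun h' => hxf (h' ▸ ha), hm.2 (Finset.mem_insert_of_mem ha)⟩
  · simp only [List.Chain', List.isChain_map]
    refine chain'_mono_mem (fun a ha b hb hab => ?_) hc
    exact adjFacets_erase ((hmem a ha).2 (Finset.mem_insert_self _ _))
      ((hmem b hb).2 (Finset.mem_insert_self _ _)) hab

lemma reachable_of_mem_facet {C : Finset (Finset V)} {H : Finset V} (hH : H ∈ C)
    {u v : V} (hu : u ∈ H) (hv : v ∈ H) : (skeleton C).Reachable u v := by
  by_cases h : u = v
  · subst h; rfl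
  · exact SimpleGraph.Adj.reachable ⟨h, H, hH, hu, hv⟩

lemma reachable_along {C : Finset (Finset V)} :
    ∀ (P : List (Finset V)) (F G : Finset V), P.head? = some F → P.getLast? = some G →
      (∀ H ∈ P, H ∈ C ∧ 2 ≤ H.card) → P.Chain' AdjFacets →
      ∀ x ∈ F, ∀ s ∈ G, (skeleton C).Reachable x s
  | [], F, G, hh, _, _, _ => by simp at hh
  | [H], F, G, hh, hl, hmem, _ => by
      simp only [List.head?_cons, Option.some.injEq] at hh
      rw [List.getLast?_singleton, Option.some.injEq] at hl
      subst hh; subst hl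
      intro x hx s hs
      exact reachable_of_mem_facet (hmem _ (by simp)).1 hx hs
  | H :: H' :: P, F, G, hh, hl, hmem, hc => by
      simp only [List.head?_cons, Option.some.injEq] at hh
      subst hh
      rw [List.getLast?_cons_cons] at hl
      obtain ⟨hadj, hc'⟩ := List.isChain_cons_cons.1 hc
      intro x hx s hs
      have hHC := hmem H (by simp)
      have h1 : 1 ≤ (H ∩ H').card := by
        have h2 := hadj.2.2
        have h3 := hHC.2
        omega
      obtain ⟨t, ht⟩ := Finset.card_pos.1 h1
      have htH : t ∈ H := (Finset.mem_inter.1 ht).1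
      have htH' : t ∈ H' := (Finset.mem_inter.1 ht).2
      refine (reachable_of_mem_facet hHC.1 hx htH).trans ?_
      exact reachable_along (H' :: P) H' G rfl hl
        (fun K hK => hmem K (List.mem_cons_of_mem _ hK)) hc' t htH' s hs

/-- Distance from a vertex to a target set, as a `Finset.inf`. -/
def gdist (C : Finset (Finset V)) (S : Finset V) (u : V) : ℕ∞ :=
  S.inf fun v => (skeleton C).edist u v

lemma vdistSets_eq_inf {C : Finset (Finset V)} (h2 : ¬ C.sup Finset.card ≤ 1)
    (T S : Finset V) : vdistSets C T S = T.inf (gdist C S) := by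
  rw [vdistSets, if_neg h2]
  simp [gdist, Finset.inf_eq_iInf]

lemma gdist_le {C : Finset (Finset V)} {S : Finset V} {u s : V} (hs : s ∈ S) :
    gdist C S u ≤ (skeleton C).edist u s :=
  Finset.inf_le hs

lemma gdist_exists {C : Finset (Finset V)} {S : Finset V} (hS : S.Nonempty) (u : V) :
    ∃ s ∈ S, gdist C S u = (skeleton C).edist u s :=
  Finset.exists_mem_eq_inf S hS _

lemma vdist_vertex_ne_top {C : Finset (Finset V)} {d : ℕ} (hpure : Pure C d)
    (hnormal : Normal C) {S : Finset V} (hS : S.Nonempty) (hSv : S ⊆ verts C)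
    {x : V} {F : Finset V} (hF : F ∈ C) (hx : x ∈ F) :
    vdistSets C {x} S ≠ ⊤ := by
  by_cases h1 : C.sup Finset.card ≤ 1
  · rw [vdistSets, if_pos h1, if_pos ⟨Finset.singleton_nonempty x, hS⟩]
    split <;> simp
  · have hcard2 : ∀ H ∈ C, 2 ≤ H.card := by
      rw [Finset.sup_le_iff] at h1
      push_neg at h1
      obtain ⟨H₀, hH₀, hc⟩ := h1
      intro H hH
      rw [hpure H hH, ← hpure H₀ hH₀]
      omega
    obtain ⟨s, hs⟩ := hS
    obtain ⟨G, hG, hsG⟩ := mem_verts'.1 (hSv hs)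
    obtain ⟨P, hh, hl, hmem, hc⟩ := hnormal ∅ F hF G hG (Finset.empty_subset _)
      (Finset.empty_subset _)
    have hreach : (skeleton C).Reachable x s :=
      reachable_along P F G hh hl
        (fun H hH => ⟨(hmem H hH).1, hcard2 H (hmem H hH).1⟩) hc x hx s hsG
    rw [vdistSets_eq_inf h1, Finset.inf_singleton]
    intro htop
    have h3 : gdist C S x ≤ (skeleton C).edist x s := gdist_le hs
    rw [htop, top_le_iff] at h3
    exact SimpleGraph.edist_ne_top_iff_reachable.2 hreach h3

lemma distVector_ne_top :
    ∀ (F : List V) (C : Finset (Finset V)) (S : Finset V),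
    Pure C F.length → Normal C → S.Nonempty → S ⊆ verts C →
    IsOrderedFacet C F → Admissible C F S →
    (F.toFinset ∩ S = ∅ ∨ (IsFace C S ∧ ¬ S ⊂ F.toFinset)) →
    ∀ lam ∈ distVector C F S, lam ≠ ⊤
  | [], C, S, _, _, _, _, _, _, _ => by simp [distVector]
  | x :: rest, C, S, hpure, hnormal, hS, hSv, hF, hadm, hcase => by
      intro lam hlam
      obtain ⟨hnd, hFc⟩ := hF
      have hxrest : x ∉ rest := (List.nodup_cons.1 hnd).1
      have hndr : rest.Nodup := (List.nodup_cons.1 hnd).2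
      have hxF : x ∈ (x :: rest).toFinset := by simp
      simp only [distVector, List.mem_cons] at hlam
      rcases hlam with rfl | hlam
      · exact vdist_vertex_ne_top hpure hnormal hS hSv hFc hxF
      rcases rest with _ | ⟨y, rest0⟩
      · simp [distVector] at hlam
      -- now rest = y :: rest0 is nonempty
      have hcard : (x :: y :: rest0).toFinset.card = rest0.length + 2 := by
        rw [List.toFinset_card_of_nodup hnd]
        simp
      have h2 : ¬ C.sup Finset.card ≤ 1 := by
        intro h
        have hge : (x :: y :: rest0).toFinset.card ≤ C.sup Finset.card :=
          Finset.le_sup hFc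
        omega
      have hxrest' : x ∉ (y :: rest0).toFinset := by
        rw [List.mem_toFinset]; exact hxrest
      have hrestFacet : (y :: rest0).toFinset ∈ link C x := by
        refine mem_link'.2 ⟨(x :: y :: rest0).toFinset, hFc, hxF, ?_⟩
        have hins : (x :: y :: rest0).toFinset = insert x ((y :: rest0).toFinset) := by
          simp
        rw [hins, Finset.erase_insert hxrest']
      have hpure' : Pure (link C x) (y :: rest0).length :=
        pure_link' (d := (y :: rest0).length) hpure
      have hnormal' := normal_link' hnormal x
      have hOF' : IsOrderedFacet (link C x) (y :: rest0) := ⟨hndr, hrestFacet⟩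
      have hadm' := hadm.2
      have hfinx : vdistSets C {x} S ≠ ⊤ :=
        vdist_vertex_ne_top hpure hnormal hS hSv hFc hxF
      by_cases hxS : x ∈ S
      · -- x ∈ S : target set is S ∩ verts (link C x) = S.erase x
        have hcase' : IsFace C S ∧ ¬ S ⊂ (x :: y :: rest0).toFinset := by
          rcases hcase with h | h
          · exact absurd (Finset.eq_empty_iff_forall_notMem.1 h x
              (Finset.mem_inter.2 ⟨hxF, hxS⟩)) (fun h => h)
          · exact h
        obtain ⟨⟨G, hG, hSG⟩, hnsub⟩ := hcase'
        have hxG : x ∈ G := hSG hxS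
        have hS'eq : targetSet C x S = S.erase x := by
          rw [targetSet, if_pos hxS]
          ext s
          simp only [Finset.mem_inter, Finset.mem_erase, mem_verts_link']
          constructor
          · rintro ⟨hsS, hne, -⟩; exact ⟨hne, hsS⟩
          · rintro ⟨hne, hsS⟩; exact ⟨hsS, hne, G, hG, hxG, hSG hsS⟩
        have hS'ne : (targetSet C x S).Nonempty := by
          rw [hS'eq]
          rcases Finset.eq_empty_or_nonempty (S.erase x) with he | h
          · exfalso
            rcases (Finset.erase_eq_empty_iff S x).1 he with rfl | rfl
            · exact hS.ne_empty rfl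
            · apply hnsub
              rw [Finset.ssubset_def]
              constructor
              · intro a ha
                rw [Finset.mem_singleton] at ha
                subst ha; exact hxF
              · intro hsub
                have := Finset.card_le_card hsub
                rw [Finset.card_singleton] at this
                omega
          · exact h
        have hS'v : targetSet C x S ⊆ verts (link C x) := by
          rw [targetSet, if_pos hxS]; exact Finset.inter_subset_right
        have hface' : IsFace (link C x) (targetSet C x S) := by
          refine ⟨G.erase x, mem_link'.2 ⟨G, hG, hxG, rfl⟩, ?_⟩
          rw [hS'eq]; exact Finset.erase_subset_erase x hSG
        have hnsub' : ¬ targetSet C x S ⊂ (y :: rest0).toFinset := by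
          rw [hS'eq]
          intro hsub
          rw [Finset.ssubset_def] at hsub
          apply hnsub
          rw [Finset.ssubset_def]
          have hSsubF : S ⊆ (x :: y :: rest0).toFinset := by
            intro s hsS
            by_cases h : s = x
            · subst h; exact hxF
            · have h1 : s ∈ S.erase x := Finset.mem_erase.2 ⟨h, hsS⟩
              have h2 := hsub.1 h1
              rw [List.toFinset_cons]
              exact Finset.mem_insert_of_mem h2
          refine ⟨hSsubF, fun hFS => ?_⟩
          apply hsub.2
          intro a ha
          have haF : a ∈ (x :: y :: rest0).toFinset := by
            rw [List.toFinset_cons]; exact Finset.mem_insert_of_mem ha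
          refine Finset.mem_erase.2 ⟨?_, hFS haF⟩
          intro h; subst h
          exact hxrest' ha
        exact distVector_ne_top (y :: rest0) (link C x) (targetSet C x S)
          hpure' hnormal' hS'ne hS'v hOF' hadm' (Or.inr ⟨hface', hnsub'⟩) lam hlam
      · -- x ∉ S : target set is the set of neighbours one step closer to S
        have hS'eq : targetSet C x S = (verts (link C x)).filter
            (fun w => vdistSets C {w} S + 1 = vdistSets C {x} S) := by
          rw [targetSet, if_neg hxS]
        have hgfin : gdist C S x ≠ ⊤ := by
          rw [vdistSets_eq_inf h2, Finset.inf_singleton] at hfinx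
          exact hfinx
        obtain ⟨m, hm⟩ := WithTop.ne_top_iff_exists.1 hgfin
        obtain ⟨s, hsS, hsmin⟩ := gdist_exists (C := C) hS x
        have hne0 : m ≠ 0 := by
          intro h0
          subst h0
          rw [hsmin] at hm
          have : x = s := SimpleGraph.edist_eq_zero_iff.1 hm.symm
          subst this
          exact hxS hsS
        obtain ⟨n, rfl⟩ := Nat.exists_eq_succ_of_ne_zero hne0
        simp only [Nat.succ_eq_add_one] at hm
        have hm' : gdist C S x = ((n + 1 : ℕ) : ℕ∞) := by exact_mod_cast hm.symm
        have hedist : (skeleton C).edist x s = ((n + 1 : ℕ) : ℕ∞) := by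
          rw [← hsmin]; exact hm'
        obtain ⟨p, hp⟩ := SimpleGraph.exists_walk_of_edist_eq_coe hedist
        cases p with
        | nil => simp at hp
        | @cons _ w _ hadj q =>
          have hlen : q.length = n := by
            simp only [SimpleGraph.Walk.length_cons] at hp
            omega
          have hwlink : w ∈ verts (link C x) := by
            obtain ⟨hne, H, hH, hxH, hwH⟩ := hadj
            exact mem_verts_link'.2 ⟨Ne.symm hne, H, hH, hxH, hwH⟩
          have hle : gdist C S w ≤ (n : ℕ∞) := by
            refine le_trans (gdist_le hsS) ?_
            calc (skeleton C).edist w s ≤ (q.length : ℕ∞) := SimpleGraph.edist_le q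
              _ = (n : ℕ∞) := by exact_mod_cast hlen
          have hge : (n : ℕ∞) ≤ gdist C S w := by
            by_contra hlt
            push_neg at hlt
            obtain ⟨s', hs'S, hs'⟩ := gdist_exists (C := C) hS w
            have hxw1 : (skeleton C).edist x w = 1 :=
              SimpleGraph.edist_eq_one_iff_adj.2 hadj
            have h4 : (skeleton C).edist x s' ≤ 1 + (skeleton C).edist w s' := by
              refine le_trans (SimpleGraph.edist_triangle (v := w)) ?_
              rw [hxw1]
            have h5 : gdist C S x ≤ 1 + gdist C S w := by
              rw [hs']
              exact le_trans (gdist_le hs'S) h4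
            have h6 : gdist C S x < 1 + (n : ℕ∞) :=
              lt_of_le_of_lt h5 (WithTop.add_lt_add_left (by exact ENat.one_ne_top) hlt)
            rw [hm'] at h6
            have h7 : ((n + 1 : ℕ) : ℕ∞) = 1 + (n : ℕ∞) := by
              push_cast; ring
            rw [h7] at h6
            exact lt_irrefl _ h6
          have hgw : gdist C S w = (n : ℕ∞) := le_antisymm hle hge
          have hwS' : w ∈ targetSet C x S := by
            rw [hS'eq, Finset.mem_filter]
            refine ⟨hwlink, ?_⟩
            rw [vdistSets_eq_inf h2, vdistSets_eq_inf h2, Finset.inf_singleton,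
              Finset.inf_singleton, hgw, hm']
            push_cast; ring
          have hS'ne : (targetSet C x S).Nonempty := ⟨w, hwS'⟩
          have hS'v : targetSet C x S ⊆ verts (link C x) := by
            rw [hS'eq]; exact Finset.filter_subset _ _
          have hdisj : (y :: rest0).toFinset ∩ targetSet C x S = ∅ := by
            rw [Finset.eq_empty_iff_forall_notMem]
            intro v hv
            rw [Finset.mem_inter, hS'eq, Finset.mem_filter] at hv
            obtain ⟨hvrest, -, hveq⟩ := hv
            have hvF : v ∈ (x :: y :: rest0).toFinset := by
              rw [List.toFinset_cons]
              exact Finset.mem_insert_of_mem hvrest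
            have hmono : vdistSets C (x :: y :: rest0).toFinset S ≤ vdistSets C {v} S := by
              rw [vdistSets_eq_inf h2, vdistSets_eq_inf h2, Finset.inf_singleton]
              exact Finset.inf_le hvF
            rw [← hadm.1] at hmono
            have hvne : vdistSets C {v} S ≠ ⊤ := by
              intro h
              rw [h] at hveq
              rw [← hveq] at hfinx
              simp at hfinx
            have hlt : vdistSets C {v} S < vdistSets C {x} S := by
              rw [← hveq]
              exact (ENat.lt_add_one_iff hvne).2 le_rfl
            exact absurd (lt_of_lt_of_le hlt hmono) (lt_irrefl _)
          exact distVector_ne_top (y :: rest0) (link C x) (targetSet C x S)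
            hpure' hnormal' hS'ne hS'v hOF' hadm' (Or.inl hdisj) lam hlam

end MCP

open MCP in
/-- finiteness of the vector of distances: if `F` is admissibly
ordered with respect to a nonempty target set `S`, and either `F ∩ S = ∅` or `S` is a
face of `C` not strictly contained in `F`, then all entries of the vector of distances
from `F` to `S` are finite. -/
theorem statement16 {V : Type} [DecidableEq V] [Fintype V] (d : ℕ)
    (C : Finset (Finset V)) (hpure : Pure C d) (hnormal : Normal C)
    (S : Finset V) (hS : S.Nonempty) (hSv : S ⊆ verts C)
    (F : List V) (hF : IsOrderedFacet C F) (hadm : Admissible C F S)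
    (hcase : F.toFinset ∩ S = ∅ ∨ (IsFace C S ∧ ¬ S ⊂ F.toFinset)) :
    ∀ lam ∈ distVector C F S, lam ≠ ⊤ := by
  have hd : d = F.length := by
    rw [← hpure _ hF.2, List.toFinset_card_of_nodup hF.1]
  exact distVector_ne_top F C S (hd ▸ hpure) hnormal hS hSv hF hadm hcase
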